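/- arXiv:1704.00044 — 2 statements merged into one kernel-verified Lean document; each statement's English description precedes it below -/
import Mathlib

section
/- Let W̃ be a random walk with i.i.d. integer-valued steps satisfying W̃_1 ≥ -1 almost surely (downward skip-free). Let S_j be the first hitting time of -j by W̃, i.e., S_j = inf{n ≥ 0 : W̃_n = -j}. Then for all 1 ≤ j ≤ n, P(S_j = n) = (j/n) P(W̃_n = -j). -/
lemma cycle_count (n j : ℕ) (hn : 0 < n) (hj : 1 ≤ j) (y : ℕ → ℤ)
    (hper : ∀ t, y (t + n) = y t) (hy1 : ∀ t, -1 ≤ y t)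
    (hsum : ∑ t ∈ Finset.range n, y t = -(j : ℤ)) :
    ((Finset.range n).filter (fun k => ∀ m < n, -(j : ℤ) <
        ∑ t ∈ Finset.range m, y (k + t))).card = j := by
  set S : ℕ → ℤ := fun m => ∑ t ∈ Finset.range m, y t with hSdef
  have hSadd : ∀ k m : ℕ, S (k + m) = S k + ∑ t ∈ Finset.range m, y (k + t) := by
    intro k m; simpa using Finset.sum_range_add y k m
  have hSn : S n = -(j : ℤ) := hsum
  have hSper : ∀ m, S (m + n) = S m - j := by
    intro m
    have h1 := hSadd n m
    have h2 : ∀ t, y (n + t) = y t := fun t => by rw [Nat.add_comm]; exact hper t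
    simp only [h2] at h1
    rw [Nat.add_comm m n, h1, hSn]
    have : ∑ t ∈ Finset.range m, y t = S m := rfl
    rw [this]; ring
  have hstep : ∀ u, S (u + 1) = S u + y u := fun u => Finset.sum_range_succ y u
  set M : ℕ → ℤ := fun u => (Finset.range (u + 1)).inf' Finset.nonempty_range_add_one S with hMdef
  have hM_le : ∀ t u : ℕ, t ≤ u → M u ≤ S t := fun t u h =>
    Finset.inf'_le _ (Finset.mem_range.2 (by omega))
  have hM_ex : ∀ u : ℕ, ∃ t ≤ u, M u = S t := by
    intro u
    obtain ⟨t, ht, h⟩ := Finset.exists_mem_eq_inf' (Finset.nonempty_range_add_one (n := u)) S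
    exact ⟨t, Nat.lt_succ_iff.1 (Finset.mem_range.1 ht), h⟩
  have hM_succ : ∀ u, M (u + 1) = min (S (u + 1)) (M u) := by
    intro u
    apply le_antisymm
    · apply le_min
      · exact Finset.inf'_le _ (Finset.mem_range.2 (by omega))
      · obtain ⟨t, ht, hMt⟩ := hM_ex u
        rw [hMt]
        exact hM_le t (u + 1) (by omega)
    · apply Finset.le_inf'
      intro b hb
      rcases Nat.lt_succ_iff_lt_or_eq.1 (Finset.mem_range.1 hb) with h | h
      · exact le_trans (min_le_right _ _) (hM_le b u (by omega))
      · rw [h]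
        exact min_le_left _ _
  have hdrop : ∀ v : ℕ, M v - M (v + 1) = if S (v + 1) < M v then 1 else 0 := by
    intro v
    have h1 : M v ≤ S v := hM_le v v le_rfl
    have h2 : S (v + 1) = S v + y v := hstep v
    have h3 : -1 ≤ y v := hy1 v
    rw [hM_succ v]
    rcases le_or_gt (M v) (S (v + 1)) with h | h
    · rw [min_eq_right h, if_neg (not_lt.2 h)]; ring
    · rw [min_eq_left h.le, if_pos h]; omega
  have hGood_iff : ∀ v : ℕ, (S (v + 1) < M v) ↔ ∀ t < v + 1, S (v + 1) < S t := by
    intro v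
    constructor
    · intro h t ht; exact lt_of_lt_of_le h (hM_le t v (by omega))
    · intro h
      obtain ⟨t, ht, hMt⟩ := hM_ex v
      rw [hMt]; exact h t (by omega)
  have hsum_eq : ∀ k m : ℕ, ∑ t ∈ Finset.range m, y (k + t) = S (k + m) - S k := by
    intro k m; rw [hSadd k m]; ring
  have cond_iff : ∀ k, k < n →
      ((∀ m < n, -(j : ℤ) < ∑ t ∈ Finset.range m, y (k + t)) ↔
        (∀ t < n + k, S (n + k) < S t)) := by
    intro k hk
    have hkn : S (n + k) = S k - j := by rw [Nat.add_comm]; exact hSper k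
    constructor
    · intro h t ht
      rcases lt_or_ge t k with htk | htk
      · have hm : t + n - k < n := by omega
        have h5 := h (t + n - k) hm
        rw [hsum_eq] at h5
        have he : k + (t + n - k) = t + n := by omega
        rw [he, hSper t] at h5
        omega
      · have h5 := h (t - k) (by omega)
        rw [hsum_eq] at h5
        have he : k + (t - k) = t := by omega
        rw [he] at h5
        omega
    · intro h m hm
      rw [hsum_eq]
      have h5 := h (k + m) (by omega)
      omega
  -- rewrite indicator
  have hterm : ∀ k ∈ Finset.range n,
      ((if (∀ m < n, -(j : ℤ) < ∑ t ∈ Finset.range m, y (k + t)) then (1 : ℤ) else 0)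
        = M (n - 1 + k) - M (n - 1 + (k + 1))) := by
    intro k hk
    have hk' : k < n := Finset.mem_range.1 hk
    have hv : n - 1 + k + 1 = n + k := by omega
    have hv2 : n - 1 + (k + 1) = n + k := by omega
    rw [hv2, ← hv, hdrop (n - 1 + k), hv]
    apply if_congr _ rfl rfl
    rw [cond_iff k hk']
    rw [show n + k = n - 1 + k + 1 from hv.symm]
    exact (hGood_iff (n - 1 + k)).symm
  have hcast : (((Finset.range n).filter (fun k => ∀ m < n, -(j : ℤ) <
        ∑ t ∈ Finset.range m, y (k + t))).card : ℤ) = (j : ℤ) := by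
    rw [Finset.card_filter]
    push_cast
    rw [Finset.sum_congr rfl hterm, Finset.sum_range_sub' (fun i => M (n - 1 + i)) n]
    -- M (n-1+0) - M (n-1+n) = j
    have hA : M (n - 1 + n) = M (n - 1) - j := by
      have hle : M (n - 1 + n) ≤ M (n - 1) - j := by
        obtain ⟨t, ht, hMt⟩ := hM_ex (n - 1)
        have := hM_le (t + n) (n - 1 + n) (by omega)
        rw [hSper t] at this
        omega
      have hge : M (n - 1) - j ≤ M (n - 1 + n) := by
        obtain ⟨s, hs, hMs⟩ := hM_ex (n - 1 + n)
        rcases le_or_gt s (n - 1) with h | h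
        · have := hM_le s (n - 1) h
          omega
        · have hs' : s - n ≤ n - 1 := by omega
          have h1 := hM_le (s - n) (n - 1) hs'
          have h2 : S s = S (s - n) - j := by
            have he : s - n + n = s := by omega
            have h3 := hSper (s - n)
            rwa [he] at h3
          omega
      omega
    simp only [Nat.add_zero] at *
    omega
  exact_mod_cast hcast

/-- Cyclic lemma (Kemperman / Otter–Dwass formula) for downward skip-free walks:
if the i.i.d. steps of the walk W̃ have law p on ℤ with p j = 0 for j < -1, then
for 1 ≤ j ≤ n the probability that the walk first hits -j at time n equals
(j/n) times the probability that W̃_n = -j.  Probabilities of events about the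
first n steps are written as sums over the n-step paths x : Fin n → ℤ of the
product of step probabilities. -/
theorem cyclic_lemma (p : ℤ → ℝ) (hpnn : ∀ x, 0 ≤ p x) (hpsum : ∑' x : ℤ, p x = 1)
    (hskip : ∀ x : ℤ, x < -1 → p x = 0)
    (j n : ℕ) (hj : 1 ≤ j) (hjn : j ≤ n) :
    (∑' x : Fin n → ℤ,
      if ((∀ m < n, -(j : ℤ) <
              ∑ i ∈ Finset.univ.filter (fun i : Fin n => (i : ℕ) < m), x i)
          ∧ (∑ i, x i) = -(j : ℤ))
      then ∏ i, p (x i) else 0)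
    = ((j : ℝ) / (n : ℝ)) *
      ∑' x : Fin n → ℤ, if (∑ i, x i) = -(j : ℤ) then ∏ i, p (x i) else 0 := by
  have hn0 : n ≠ 0 := by omega
  have hnpos : 0 < n := Nat.pos_of_ne_zero hn0
  haveI : NeZero n := ⟨hn0⟩
  have hp : Summable p := by
    by_contra h
    rw [tsum_eq_zero_of_not_summable h] at hpsum
    norm_num at hpsum
  have hprodnn : ∀ (N : ℕ) (x : Fin N → ℤ), 0 ≤ ∏ i, p (x i) :=
    fun N x => Finset.prod_nonneg fun i _ => hpnn _
  have hprod : ∀ N : ℕ, Summable (fun x : Fin N → ℤ => ∏ i, p (x i)) := by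
    intro N
    induction N with
    | zero => exact .of_finite
    | succ N ih =>
      have hle1 : (0 : ℤ → ℝ) ≤ p := fun a => hpnn a
      have hle2 : (0 : (Fin N → ℤ) → ℝ) ≤ fun w : Fin N → ℤ => ∏ i, p (w i) :=
        fun w => hprodnn N w
      have h2 : Summable (fun q : ℤ × (Fin N → ℤ) => p q.1 * ∏ i, p (q.2 i)) := by
        apply Summable.mul_of_nonneg hp ih hle1 hle2
      apply ((Fin.consEquiv (fun _ : Fin (N + 1) => ℤ)).summable_iff
        (f := fun x : Fin (N + 1) → ℤ => ∏ i, p (x i))).1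
      apply h2.congr
      intro q
      simp [Function.comp, Fin.prod_univ_succ]
  set F := fun x : Fin n → ℤ =>
      if ((∀ m < n, -(j : ℤ) <
              ∑ i ∈ Finset.univ.filter (fun i : Fin n => (i : ℕ) < m), x i)
          ∧ (∑ i, x i) = -(j : ℤ))
      then ∏ i, p (x i) else 0 with hF
  set G := fun x : Fin n → ℤ =>
      if (∑ i, x i) = -(j : ℤ) then ∏ i, p (x i) else 0 with hG
  have hFnn : ∀ x, 0 ≤ F x := by
    intro x; rw [hF]; dsimp only
    split_ifs
    · exact hprodnn n x
    · exact le_rfl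
  have hFle : ∀ x, F x ≤ ∏ i, p (x i) := by
    intro x; rw [hF]; dsimp only
    split_ifs
    · exact le_rfl
    · exact hprodnn n x
  have hFs : Summable F := Summable.of_nonneg_of_le hFnn hFle (hprod n)
  -- rotation equivalences
  let e : Fin n → ((Fin n → ℤ) ≃ (Fin n → ℤ)) := fun k =>
    { toFun := fun x i => x (i + k)
      invFun := fun x i => x (i - k)
      left_inv := fun x => funext fun i => congrArg x (sub_add_cancel i k)
      right_inv := fun x => funext fun i => congrArg x (add_sub_cancel_right i k) }
  have he : ∀ (k : Fin n) (x : Fin n → ℤ) (i : Fin n), e k x i = x (i + k) :=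
    fun _ _ _ => rfl
  have hrotsum : ∀ (k : Fin n) (x : Fin n → ℤ), ∑ i, x (i + k) = ∑ i, x i :=
    fun k x => Equiv.sum_comp (Equiv.addRight k) x
  have hrotprod : ∀ (k : Fin n) (x : Fin n → ℤ), ∏ i, p (x (i + k)) = ∏ i, p (x i) :=
    fun k x => Equiv.prod_comp (Equiv.addRight k) (fun i => p (x i))
  -- pointwise identity
  have hpoint : ∀ x : Fin n → ℤ, ∑ k : Fin n, F (e k x) = (j : ℝ) * G x := by
    intro x
    by_cases hxs : (∑ i, x i) = -(j : ℤ)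
    · have hFe : ∀ k : Fin n, F (e k x) =
          if (∀ m < n, -(j : ℤ) <
              ∑ i ∈ Finset.univ.filter (fun i : Fin n => (i : ℕ) < m), x (i + k))
          then ∏ i, p (x i) else 0 := by
        intro k
        simp only [hF, he]
        refine if_congr ?_ (hrotprod k x) rfl
        constructor
        · exact fun h => h.1
        · intro h
          refine ⟨h, ?_⟩
          rw [hrotsum k x]; exact hxs
      rw [Finset.sum_congr rfl fun k _ => hFe k, ← Finset.sum_filter,
        Finset.sum_const, nsmul_eq_mul]
      rw [hG]; dsimp only; rw [if_pos hxs]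
      by_cases hx1 : ∀ i, -1 ≤ x i
      · -- the cycle lemma
        set y : ℕ → ℤ := fun t => x ⟨t % n, Nat.mod_lt t hnpos⟩ with hy
        have hyx : ∀ i : Fin n, y (i : ℕ) = x i := by
          intro i
          rw [hy]; dsimp only
          congr 1
          exact Fin.ext (Nat.mod_eq_of_lt i.isLt)
        have hper : ∀ t, y (t + n) = y t := by
          intro t
          rw [hy]; dsimp only
          congr 1
          exact Fin.ext (Nat.add_mod_right t n)
        have hy1 : ∀ t, -1 ≤ y t := fun t => hx1 _
        have hysum : ∑ t ∈ Finset.range n, y t = -(j : ℤ) := by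
          rw [← Fin.sum_univ_eq_sum_range y n, Finset.sum_congr rfl fun i _ => hyx i]
          exact hxs
        have hbridge : ∀ (k : Fin n) (m : ℕ), m ≤ n →
            ∑ i ∈ Finset.univ.filter (fun i : Fin n => (i : ℕ) < m), x (i + k)
              = ∑ t ∈ Finset.range m, y ((k : ℕ) + t) := by
          intro k m hm
          refine Finset.sum_nbij' (fun i => (i : ℕ))
            (fun t => (⟨t % n, Nat.mod_lt t hnpos⟩ : Fin n)) ?_ ?_ ?_ ?_ ?_
          · intro a ha
            simp only [Finset.mem_filter, Finset.mem_univ, true_and] at ha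
            exact Finset.mem_range.2 ha
          · intro t ht
            have ht' : t < m := Finset.mem_range.1 ht
            simp only [Finset.mem_filter, Finset.mem_univ, true_and]
            rw [Nat.mod_eq_of_lt (lt_of_lt_of_le ht' hm)]
            exact ht'
          · intro a _
            exact Fin.ext (Nat.mod_eq_of_lt a.isLt)
          · intro t ht
            exact Nat.mod_eq_of_lt (lt_of_lt_of_le (Finset.mem_range.1 ht) hm)
          · intro a _
            have hidx : a + k = (⟨((k : ℕ) + (a : ℕ)) % n, Nat.mod_lt _ hnpos⟩ : Fin n) := by
              apply Fin.ext
              rw [Fin.val_add, Nat.add_comm (a : ℕ) (k : ℕ)]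
            rw [hidx, hy]
        have hcards : (Finset.univ.filter (fun k : Fin n => ∀ m < n, -(j : ℤ) <
              ∑ i ∈ Finset.univ.filter (fun i : Fin n => (i : ℕ) < m), x (i + k))).card
            = ((Finset.range n).filter (fun k => ∀ m < n, -(j : ℤ) <
              ∑ t ∈ Finset.range m, y (k + t))).card := by
          apply Finset.card_nbij (fun k : Fin n => (k : ℕ))
          · intro a ha
            simp only [Finset.coe_filter, Set.mem_setOf_eq, Finset.mem_filter, Finset.mem_univ, true_and] at ha
            simp only [Finset.coe_filter, Set.mem_setOf_eq, Finset.mem_filter, Finset.mem_range]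
            exact ⟨a.isLt, fun m hm => by rw [← hbridge a m hm.le]; exact ha m hm⟩
          · intro a _ b _ hab
            exact Fin.ext hab
          · intro b hb
            simp only [Finset.coe_filter, Set.mem_setOf_eq, Finset.mem_range] at hb
            refine ⟨⟨b, hb.1⟩, ?_, rfl⟩
            simp only [Finset.coe_filter, Set.mem_setOf_eq, Finset.mem_univ, true_and]
            intro m hm
            rw [hbridge ⟨b, hb.1⟩ m hm.le]
            exact hb.2 m hm
        have hcard := cycle_count n j hnpos hj y hper hy1 hysum
        rw [hcards, hcard]
      · push_neg at hx1
        obtain ⟨i0, hi0⟩ := hx1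
        have hz : (∏ i, p (x i)) = 0 :=
          Finset.prod_eq_zero (Finset.mem_univ i0) (hskip _ (by omega))
        rw [hz, mul_zero, mul_zero]
    · have hFe0 : ∀ k : Fin n, F (e k x) = 0 := by
        intro k
        simp only [hF, he]
        rw [if_neg]
        rintro ⟨-, h2⟩
        rw [hrotsum k x] at h2
        exact hxs h2
      have hG0 : G x = 0 := by rw [hG]; dsimp only; rw [if_neg hxs]
      rw [hG0, mul_zero]
      exact Finset.sum_eq_zero fun k _ => hFe0 k
  -- main computation
  have key : (n : ℝ) * ∑' x, F x = (j : ℝ) * ∑' x, G x := by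
    have h1 : ∀ k : Fin n, ∑' x : Fin n → ℤ, F (e k x) = ∑' x, F x :=
      fun k => (e k).tsum_eq F
    have h2 : ∀ k : Fin n, Summable (fun x : Fin n → ℤ => F (e k x)) :=
      fun k => ((e k).summable_iff (f := F)).2 hFs
    calc (n : ℝ) * ∑' x, F x
        = ∑ _k : Fin n, ∑' x, F x := by
          rw [Finset.sum_const, Finset.card_univ, Fintype.card_fin, nsmul_eq_mul]
      _ = ∑ k : Fin n, ∑' x, F (e k x) := (Finset.sum_congr rfl fun k _ => (h1 k).symm)
      _ = ∑' x, ∑ k : Fin n, F (e k x) := (Summable.tsum_finsetSum fun k _ => h2 k).symm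
      _ = ∑' x, (j : ℝ) * G x := tsum_congr hpoint
      _ = (j : ℝ) * ∑' x, G x := tsum_mul_left
  have hnne : (n : ℝ) ≠ 0 := Nat.cast_ne_zero.2 hn0
  rw [div_mul_eq_mul_div, eq_div_iff hnne]
  linarith [key]
end

section
/- Let h : [0,1] → [0,∞) be a continuous function with h(0) = 0. Define d_h(s,t) = h(s) + h(t) - 2 min{h(r) : min(s,t) ≤ r ≤ max(s,t)}. Then d_h is a pseudometric on [0,1], and the quotient metric space T_h = [0,1]/~ (where s ~ t iff d_h(s,t) = 0) is compact. -/
open Set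

/-- The pseudometric on [0,1] coded by a continuous function h:
d_h(s,t) = h(s) + h(t) - 2 min{h(r) : min(s,t) ≤ r ≤ max(s,t)}. -/
noncomputable def treeDist (h : ℝ → ℝ) (s t : ℝ) : ℝ :=
  h s + h t - 2 * sInf (h '' Icc (min s t) (max s t))

namespace TreeDistAux

variable {h : ℝ → ℝ}

lemma interval_subset {s t : ℝ} (hs : s ∈ Icc (0:ℝ) 1) (ht : t ∈ Icc (0:ℝ) 1) :
    Icc (min s t) (max s t) ⊆ Icc (0:ℝ) 1 :=
  Icc_subset_Icc (le_min hs.1 ht.1) (max_le hs.2 ht.2)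

lemma bddBelow_image (hnonneg : ∀ x ∈ Icc (0:ℝ) 1, 0 ≤ h x)
    {s t : ℝ} (hs : s ∈ Icc (0:ℝ) 1) (ht : t ∈ Icc (0:ℝ) 1) :
    BddBelow (h '' Icc (min s t) (max s t)) := by
  refine ⟨0, ?_⟩
  rintro y ⟨r, hr, rfl⟩
  exact hnonneg r (interval_subset hs ht hr)

lemma image_nonempty (s t : ℝ) : (h '' Icc (min s t) (max s t)).Nonempty :=
  ⟨h s, s, ⟨min_le_left s t, le_max_left s t⟩, rfl⟩

lemma sInf_le_left (hnonneg : ∀ x ∈ Icc (0:ℝ) 1, 0 ≤ h x)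
    {s t : ℝ} (hs : s ∈ Icc (0:ℝ) 1) (ht : t ∈ Icc (0:ℝ) 1) :
    sInf (h '' Icc (min s t) (max s t)) ≤ h s :=
  csInf_le (bddBelow_image hnonneg hs ht) ⟨s, ⟨min_le_left s t, le_max_left s t⟩, rfl⟩

lemma sInf_le_right (hnonneg : ∀ x ∈ Icc (0:ℝ) 1, 0 ≤ h x)
    {s t : ℝ} (hs : s ∈ Icc (0:ℝ) 1) (ht : t ∈ Icc (0:ℝ) 1) :
    sInf (h '' Icc (min s t) (max s t)) ≤ h t :=
  csInf_le (bddBelow_image hnonneg hs ht) ⟨t, ⟨min_le_right s t, le_max_right s t⟩, rfl⟩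

lemma treeDist_self (h : ℝ → ℝ) (s : ℝ) : treeDist h s s = 0 := by
  simp [treeDist, min_self, max_self, Icc_self]
  ring

lemma treeDist_nonneg (hnonneg : ∀ x ∈ Icc (0:ℝ) 1, 0 ≤ h x)
    {s t : ℝ} (hs : s ∈ Icc (0:ℝ) 1) (ht : t ∈ Icc (0:ℝ) 1) :
    0 ≤ treeDist h s t := by
  have h1 := sInf_le_left hnonneg hs ht
  have h2 := sInf_le_right hnonneg hs ht
  unfold treeDist
  linarith

lemma treeDist_comm (h : ℝ → ℝ) (s t : ℝ) : treeDist h s t = treeDist h t s := by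
  simp [treeDist, min_comm, max_comm]
  ring

lemma interval_subset_union (s t u : ℝ) :
    Icc (min s u) (max s u) ⊆ Icc (min s t) (max s t) ∪ Icc (min t u) (max t u) := by
  intro r hr
  obtain ⟨h1, h2⟩ := hr
  rcases le_total r t with hrt | htr
  · rcases min_le_iff.mp h1 with hs | hu
    · exact Or.inl ⟨le_trans (min_le_left s t) hs, le_trans hrt (le_max_right s t)⟩
    · exact Or.inr ⟨le_trans (min_le_right t u) hu, le_trans hrt (le_max_left t u)⟩
  · rcases le_max_iff.mp h2 with hs | hu
    · exact Or.inl ⟨le_trans (min_le_right s t) htr, le_trans hs (le_max_left s t)⟩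
    · exact Or.inr ⟨le_trans (min_le_left t u) htr, le_trans hu (le_max_right t u)⟩

lemma treeDist_triangle (hnonneg : ∀ x ∈ Icc (0:ℝ) 1, 0 ≤ h x)
    {s t u : ℝ} (hs : s ∈ Icc (0:ℝ) 1) (ht : t ∈ Icc (0:ℝ) 1) (hu : u ∈ Icc (0:ℝ) 1) :
    treeDist h s u ≤ treeDist h s t + treeDist h t u := by
  set A := sInf (h '' Icc (min s t) (max s t)) with hA
  set B := sInf (h '' Icc (min t u) (max t u)) with hB
  set C := sInf (h '' Icc (min s u) (max s u)) with hC
  have hmin : min A B ≤ C := by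
    apply le_csInf (image_nonempty s u)
    rintro y ⟨r, hr, rfl⟩
    rcases interval_subset_union s t u hr with hr' | hr'
    · exact le_trans (min_le_left A B) (csInf_le (bddBelow_image hnonneg hs ht) ⟨r, hr', rfl⟩)
    · exact le_trans (min_le_right A B) (csInf_le (bddBelow_image hnonneg ht hu) ⟨r, hr', rfl⟩)
  have hAt : A ≤ h t := sInf_le_right hnonneg hs ht
  have hBt : B ≤ h t := sInf_le_left hnonneg ht hu
  have key : A + B ≤ h t + C := by
    rcases le_total A B with hab | hab
    · have : A ≤ C := le_trans (by simp [min_eq_left hab]) hmin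
      linarith
    · have : B ≤ C := le_trans (by simp [min_eq_right hab]) hmin
      linarith
  unfold treeDist
  linarith

lemma treeDist_small (hcont : ContinuousOn h (Icc (0:ℝ) 1))
    (hnonneg : ∀ x ∈ Icc (0:ℝ) 1, 0 ≤ h x)
    {b : ℝ} (hb : b ∈ Icc (0:ℝ) 1) {ε : ℝ} (hε : 0 < ε) :
    ∃ δ > 0, ∀ a ∈ Icc (0:ℝ) 1, |a - b| < δ → treeDist h a b < ε := by
  have hcw : ContinuousWithinAt h (Icc (0:ℝ) 1) b := hcont b hb
  rw [Metric.continuousWithinAt_iff] at hcw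
  obtain ⟨δ, hδ, hδ'⟩ := hcw (ε/4) (by linarith)
  refine ⟨δ, hδ, fun a ha hab => ?_⟩
  have habs : ∀ r ∈ Icc (min a b) (max a b), |r - b| ≤ |a - b| := by
    intro r hr
    rcases le_total a b with hle | hle
    · have h1 : a ≤ r := le_trans (le_of_eq (min_eq_left hle).symm) hr.1
      have h2 : r ≤ b := le_trans hr.2 (le_of_eq (max_eq_right hle))
      rw [abs_of_nonpos (by linarith), abs_of_nonpos (by linarith)]; linarith
    · have h1 : b ≤ r := le_trans (le_of_eq (min_eq_right hle).symm) hr.1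
      have h2 : r ≤ a := le_trans hr.2 (le_of_eq (max_eq_left hle))
      rw [abs_of_nonneg (by linarith), abs_of_nonneg (by linarith)]; linarith
  have hlow : h b - ε/4 ≤ sInf (h '' Icc (min a b) (max a b)) := by
    apply le_csInf (image_nonempty a b)
    rintro y ⟨r, hr, rfl⟩
    have hr1 : r ∈ Icc (0:ℝ) 1 := interval_subset ha hb hr
    have : |h r - h b| < ε/4 := by
      have := hδ' hr1 (by rw [Real.dist_eq]; exact lt_of_le_of_lt (habs r hr) hab)
      rwa [Real.dist_eq] at this
    have := abs_lt.mp this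
    linarith [this.1]
  have hup : |h a - h b| < ε/4 := by
    have := hδ' ha (by rw [Real.dist_eq]; exact hab)
    rwa [Real.dist_eq] at this
  have := abs_lt.mp hup
  unfold treeDist
  linarith [this.2]

end TreeDistAux

/-- Type synonym for `Icc 0 1` to carry the tree pseudometric. -/
def TreeSpace (_h : ℝ → ℝ) : Type := Icc (0:ℝ) 1

def TreeSpace.mk (h : ℝ → ℝ) (x : Icc (0:ℝ) 1) : TreeSpace h := x

def TreeSpace.toReal {h : ℝ → ℝ} (x : TreeSpace h) : ℝ := (show Icc (0:ℝ) 1 from x).1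

lemma TreeSpace.mem {h : ℝ → ℝ} (x : TreeSpace h) : x.toReal ∈ Icc (0:ℝ) 1 :=
  (show Icc (0:ℝ) 1 from x).2

lemma TreeSpace.mk_surjective (h : ℝ → ℝ) : Function.Surjective (TreeSpace.mk h) :=
  fun x => ⟨x, rfl⟩

lemma TreeSpace.toReal_mk (h : ℝ → ℝ) (x : Icc (0:ℝ) 1) :
    (TreeSpace.mk h x).toReal = x.1 := rfl

/-- For a continuous h : [0,1] → [0,∞) with h(0) = 0, the function d_h is a
pseudometric on [0,1] (nonnegative, vanishing on the diagonal, symmetric, and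
satisfying the triangle inequality), and the quotient metric space
T_h = [0,1]/{d_h = 0} is compact: there is a compact metric space X and a
surjection q from [0,1] onto X with dist (q s) (q t) = d_h(s,t). -/
theorem treeDist_pseudometric_and_quotient_compact (h : ℝ → ℝ)
    (hcont : ContinuousOn h (Icc (0 : ℝ) 1))
    (hnonneg : ∀ x ∈ Icc (0 : ℝ) 1, 0 ≤ h x) (h0 : h 0 = 0) :
    (∀ s ∈ Icc (0 : ℝ) 1, treeDist h s s = 0) ∧
    (∀ s ∈ Icc (0 : ℝ) 1, ∀ t ∈ Icc (0 : ℝ) 1, 0 ≤ treeDist h s t) ∧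
    (∀ s ∈ Icc (0 : ℝ) 1, ∀ t ∈ Icc (0 : ℝ) 1, treeDist h s t = treeDist h t s) ∧
    (∀ s ∈ Icc (0 : ℝ) 1, ∀ t ∈ Icc (0 : ℝ) 1, ∀ u ∈ Icc (0 : ℝ) 1,
      treeDist h s u ≤ treeDist h s t + treeDist h t u) ∧
    (∃ (X : Type) (_ : MetricSpace X) (q : Icc (0 : ℝ) 1 → X),
      Function.Surjective q ∧ CompactSpace X ∧
      ∀ s t : Icc (0 : ℝ) 1, dist (q s) (q t) = treeDist h s t) := by
  refine ⟨fun s _ => TreeDistAux.treeDist_self h s,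
    fun s hs t ht => TreeDistAux.treeDist_nonneg hnonneg hs ht,
    fun s _ t _ => TreeDistAux.treeDist_comm h s t,
    fun s hs t ht u hu => TreeDistAux.treeDist_triangle hnonneg hs ht hu, ?_⟩
  letI P : PseudoMetricSpace (TreeSpace h) :=
    { dist := fun x y => treeDist h x.toReal y.toReal
      dist_self := fun x => TreeDistAux.treeDist_self h x.toReal
      dist_comm := fun x y => TreeDistAux.treeDist_comm h x.toReal y.toReal
      dist_triangle := fun x y z =>
        TreeDistAux.treeDist_triangle hnonneg x.mem y.mem z.mem }
  have hcontmk : Continuous (TreeSpace.mk h) := by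
    rw [Metric.continuous_iff]
    intro b ε hε
    obtain ⟨δ, hδ, hδ'⟩ := TreeDistAux.treeDist_small hcont hnonneg b.2 hε
    refine ⟨δ, hδ, fun a ha => ?_⟩
    have : dist (a : ℝ) (b : ℝ) < δ := by
      rw [Subtype.dist_eq] at ha; exact ha
    rw [Real.dist_eq] at this
    exact hδ' a.1 a.2 this
  haveI : CompactSpace (TreeSpace h) := by
    constructor
    have himg : (univ : Set (TreeSpace h)) = (TreeSpace.mk h) '' univ := by
      rw [image_univ]
      exact (range_eq_univ.mpr (TreeSpace.mk_surjective h)).symm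
    rw [himg]
    exact isCompact_univ.image hcontmk
  refine ⟨SeparationQuotient (TreeSpace h), inferInstance,
    fun x => SeparationQuotient.mk (TreeSpace.mk h x),
    (SeparationQuotient.surjective_mk).comp (TreeSpace.mk_surjective h), ?_, ?_⟩
  · constructor
    have himg : (univ : Set (SeparationQuotient (TreeSpace h))) =
        SeparationQuotient.mk '' univ := by
      rw [image_univ]
      exact (range_eq_univ.mpr SeparationQuotient.surjective_mk).symm
    rw [himg]
    exact isCompact_univ.image SeparationQuotient.continuous_mk
  · intro s t
    rw [SeparationQuotient.dist_mk]
    rfl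
end
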